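/- In a simple binary matroid, every triangle is a modular flat. -/

import Mathlib

open Set

instance : Fact (Nat.Prime 5) := ⟨by norm_num⟩

universe u

variable {α : Type u} {β : Type u}

namespace Matroid

/-- Deletion of a set of elements from a matroid. -/
def del (M : Matroid α) (D : Set α) : Matroid α := M ↾ (M.E \ D)

/-- Contraction of a set of elements, defined by duality. -/
def con (M : Matroid α) (C : Set α) : Matroid α := ((M✶.del C))✶

/-- `N` is a minor of `M`. -/
def MinorOf (N M : Matroid α) : Prop := ∃ C D : Set α, (M.con C).del D = N

/-- A function `e` is an isomorphism from `M` to `N`. -/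
def IsIsoMap (M : Matroid α) (N : Matroid β) (e : α → β) : Prop :=
  Set.BijOn e M.E N.E ∧ ∀ I ⊆ M.E, (M.Indep I ↔ N.Indep (e '' I))

/-- `M` and `N` are isomorphic matroids. -/
def IsIsoTo (M : Matroid α) (N : Matroid β) : Prop := ∃ e : α → β, IsIsoMap M N e

/-- `M` has a minor isomorphic to `N`. -/
def HasIsoMinor (M : Matroid α) (N : Matroid β) : Prop :=
  ∃ C D : Set α, IsIsoTo ((M.con C).del D) N

/-- The (extended) rank of a set in a matroid: supremum of cardinalities of
independent subsets. -/
noncomputable def eRk' (M : Matroid α) (X : Set α) : ℕ∞ :=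
  ⨆ I ∈ {I | M.Indep I ∧ I ⊆ X}, I.encard

/-- The (extended) rank of a matroid. -/
noncomputable def eRank' (M : Matroid α) : ℕ∞ := M.eRk' M.E

/-- A circuit: a minimal dependent set. -/
def IsCircuit' (M : Matroid α) (C : Set α) : Prop :=
  M.Dep C ∧ ∀ D, D ⊂ C → M.Indep D

/-- A triangle: a 3-element circuit. -/
def IsTriangle (M : Matroid α) (T : Set α) : Prop := M.IsCircuit' T ∧ T.encard = 3

/-- A triad: a 3-element cocircuit. -/
def IsTriad (M : Matroid α) (T : Set α) : Prop := M✶.IsCircuit' T ∧ T.encard = 3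

/-- A `k`-separation in the sense of Tutte. -/
def IsKSep (M : Matroid α) (k : ℕ) (X : Set α) : Prop :=
  X ⊆ M.E ∧ (k : ℕ∞) ≤ X.encard ∧ (k : ℕ∞) ≤ (M.E \ X).encard ∧
    M.eRk' X + M.eRk' (M.E \ X) + 1 ≤ M.eRank' + k

/-- Tutte `n`-connectivity: there is no `k`-separation for any `k < n`. -/
def TutteConn (M : Matroid α) (n : ℕ) : Prop := ∀ k < n, ∀ X, ¬ M.IsKSep k X

/-- 3-connectivity. -/
def ThreeConn (M : Matroid α) : Prop := M.TutteConn 3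

/-- A matroid is 3-connected up to series and parallel sets if it is connected and
every 2-separation has a side that is a parallel set (rank at most 1) or a
series set (corank at most 1). -/
def ThreeConnUpToSP (M : Matroid α) : Prop :=
  M.TutteConn 2 ∧ ∀ X, M.IsKSep 2 X →
    (M.eRk' X ≤ 1 ∨ M✶.eRk' X ≤ 1 ∨ M.eRk' (M.E \ X) ≤ 1 ∨ M✶.eRk' (M.E \ X) ≤ 1)

/-- A simple matroid: every subset of the ground set with at most two elements
is independent. -/
def SimpleM (M : Matroid α) : Prop := ∀ X ⊆ M.E, X.encard ≤ 2 → M.Indep X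

/-- A modular flat. -/
def ModularFlat (M : Matroid α) (F : Set α) : Prop :=
  M.IsFlat F ∧ ∀ F', M.IsFlat F' →
    M.eRk' F + M.eRk' F' = M.eRk' (F ∪ F') + M.eRk' (F ∩ F')


/-- `M` is the matroid represented (on its ground set) by the vector family `φ`. -/
def IsRepBy (𝔽 : Type) [Field 𝔽] {V : Type*} [AddCommGroup V] [Module 𝔽 V]
    (M : Matroid α) (φ : α → V) : Prop :=
  ∀ I ⊆ M.E, (M.Indep I ↔ LinearIndependent 𝔽 (fun x : I => φ x))

/-- `M` is representable over the field `𝔽`. -/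
def FieldRepresentable (𝔽 : Type) [Field 𝔽] (M : Matroid α) : Prop :=
  ∃ φ : α → (α →₀ 𝔽), M.IsRepBy 𝔽 (V := α →₀ 𝔽) φ

/-- `M` is a binary matroid. -/
def Binary (M : Matroid α) : Prop := M.FieldRepresentable (ZMod 2)

/-- `M` is isomorphic to the Fano matroid `F₇`: its ground set is in bijection with
the seven nonzero vectors of `GF(2)³`, with independence given by linear independence. -/
def IsFano (M : Matroid α) : Prop :=
  ∃ g : α → (Fin 3 → ZMod 2),
    Set.BijOn g M.E {v | v ≠ 0} ∧ M.IsRepBy (ZMod 2) g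

open Fin.NatCast in
/-- The standard binary representation vectors of `R₁₀`: the first five columns are
the identity, the last five are the circular shifts of `(1,1,0,0,1)`. -/
def r10vec (i : ℕ) : Fin 5 → ZMod 2 :=
  if i < 5 then (fun k => if (k : ℕ) = i then 1 else 0)
  else (fun k => ![1,1,0,0,1] (k - ((i - 5 : ℕ) : Fin 5)))

/-- `M` is isomorphic to `R₁₀`. -/
def IsR10 (M : Matroid α) : Prop :=
  ∃ g : α → Fin 10, Set.BijOn g M.E Set.univ ∧
    M.IsRepBy (ZMod 2) (fun x => r10vec (g x))

/-- `M` is (a labeled copy of) `R₁₀` on ground set `{0, …, 9} ⊆ ℕ` with the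
standard labeling. -/
def IsR10Labeled (M : Matroid ℕ) : Prop :=
  M.E = {n | n < 10} ∧ M.IsRepBy (ZMod 2) r10vec

/-- The uniform matroid `U_{r,n}` (up to isomorphism). -/
def IsUniformM (M : Matroid α) (r n : ℕ) : Prop :=
  M.E.encard = n ∧ ∀ I ⊆ M.E, (M.Indep I ↔ I.encard ≤ r)

/-- `M` has a minor isomorphic to `F₇` or to `F₇*`. -/
def HasFanoMinor (M : Matroid α) : Prop :=
  ∃ C D : Set α, IsFano ((M.con C).del D) ∨ IsFano ((M.con C).del D)✶

/-- `M` is Fano-fragile: `M` is binary, has an `{F₇, F₇*}`-minor, and for each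
element `e`, at most one of `M ⧹ e`, `M / e` has an `{F₇, F₇*}`-minor. -/
def FanoFragile (M : Matroid α) : Prop :=
  M.Binary ∧ M.HasFanoMinor ∧
    ∀ e ∈ M.E, ¬ (HasFanoMinor (M.del {e}) ∧ HasFanoMinor (M.con {e}))

/-- `M` has a minor isomorphic to `U_{2,5}` or `U_{3,5}`. -/
def HasU25U35Minor (M : Matroid α) : Prop :=
  ∃ C D : Set α, IsUniformM ((M.con C).del D) 2 5 ∨ IsUniformM ((M.con C).del D) 3 5

/-- `M` is strictly `{U_{2,5}, U_{3,5}}`-fragile. -/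
def StrictlyU25U35Fragile (M : Matroid α) : Prop :=
  M.HasU25U35Minor ∧
    ∀ e ∈ M.E, ¬ (HasU25U35Minor (M.del {e}) ∧ HasU25U35Minor (M.con {e}))

/-- The binary representation vectors of the rank-`n` wheel `W_n`:
`Sum.inl i` is the spoke `sᵢ` (a standard basis vector) and `Sum.inr i` is the rim
element `rᵢ` joining spokes `i` and `i+1 (mod n)`. -/
def wheelVec (n : ℕ) : Fin n ⊕ Fin n → (Fin n → ZMod 2) :=
  Sum.elim (fun i j => if (j : ℕ) = (i : ℕ) then 1 else 0)
    (fun i j => if (j : ℕ) = (i : ℕ) ∨ (j : ℕ) = ((i : ℕ) + 1) % n then 1 else 0)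

/-- `W` is a wheel of rank `n ≥ 2` having `(a, b, c)` as a triangle in which `a` and
`c` are spoke elements and `b` is the rim element joining them. -/
def IsWheel (W : Matroid α) (n : ℕ) (a b c : α) : Prop :=
  ∃ h : 2 ≤ n, ∃ g : α → (Fin n ⊕ Fin n),
    Set.BijOn g W.E Set.univ ∧
    g a = Sum.inl ⟨0, by omega⟩ ∧ g b = Sum.inr ⟨0, by omega⟩ ∧
    g c = Sum.inl ⟨1, by omega⟩ ∧
    W.IsRepBy (ZMod 2) (fun x => wheelVec n (g x))

/-- `M` is a wheel (of some rank at least 2). -/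
def IsWheelMatroid (M : Matroid α) : Prop := ∃ (n : ℕ) (a b c : α), M.IsWheel n a b c

/-- The rational representation vectors of the rank-`n` whirl. -/
def whirlVec (n : ℕ) : Fin n ⊕ Fin n → (Fin n → ℚ) :=
  Sum.elim (fun i j => if (j : ℕ) = (i : ℕ) then 1 else 0)
    (fun i j => (if (j : ℕ) = (i : ℕ) then 1 else 0) +
      (if (j : ℕ) = ((i : ℕ) + 1) % n then (if (i : ℕ) = n - 1 then 2 else 1) else 0))

/-- `M` is a whirl (of some rank at least 2). -/
def IsWhirlMatroid (M : Matroid α) : Prop :=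
  ∃ n : ℕ, 2 ≤ n ∧ ∃ g : α → (Fin n ⊕ Fin n),
    Set.BijOn g M.E Set.univ ∧ M.IsRepBy ℚ (fun x => whirlVec n (g x))

/-- `P` is the generalized parallel connection of `M₁` and `M₂` along `T`:
its ground set is `E(M₁) ∪ E(M₂)`, where `E(M₁) ∩ E(M₂) = T`, and its flats are
exactly the sets whose intersections with `E(M₁)` and `E(M₂)` are flats. -/
def IsGPC (P M₁ M₂ : Matroid α) (T : Set α) : Prop :=
  M₁.E ∩ M₂.E = T ∧ P.E = M₁.E ∪ M₂.E ∧
    ∀ F, P.IsFlat F ↔ (F ⊆ P.E ∧ M₁.IsFlat (F ∩ M₁.E) ∧ M₂.IsFlat (F ∩ M₂.E))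

/-- The conditions under which the generalized parallel connection
`M₁ ⊠_T M₂` is defined: `T = E(M₁) ∩ E(M₂)` is a modular flat of `M₂` and a common
restriction of `M₁` and `M₂`. -/
def GPCDefined (M₁ M₂ : Matroid α) (T : Set α) : Prop :=
  M₁.E ∩ M₂.E = T ∧ M₂.ModularFlat T ∧ (M₁ ↾ T) = (M₂ ↾ T)

/-- The set of elements of an (ordered) triangle. -/
def triSet (p : α × α × α) : Set α := {p.1, p.2.1, p.2.2}

/-- `M` is obtained from `N` by gluing, for each `i`, a wheel of rank `n i` onto the
triangle `Tr i` of `N`, deleting the set `X` afterwards (Definition 2.6): take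
iterated generalized parallel connections with wheels `W i` along the triangles,
then delete the set `X` of triangle elements, which must contain every hub element
`bᵢ` that is not a spoke element `aⱼ` or `cⱼ` of another triangle. -/
def GluedWheelsData (M N : Matroid α) (t : ℕ) (Tr : Fin t → α × α × α)
    (n : Fin t → ℕ) (X : Set α) : Prop :=
  ∃ (W : Fin t → Matroid α) (Ns : ℕ → Matroid α),
    (∀ i, N.IsTriangle (triSet (Tr i))) ∧
    (∀ i, (W i).IsWheel (n i) (Tr i).1 (Tr i).2.1 (Tr i).2.2) ∧
    Ns 0 = N ∧
    (∀ i : Fin t, IsGPC (Ns ((i : ℕ) + 1)) (Ns (i : ℕ)) (W i) (triSet (Tr i))) ∧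
    X ⊆ (⋃ i, triSet (Tr i)) ∧
    (∀ i : Fin t, (Tr i).2.1 ∈ X ∨ ∃ j : Fin t, (Tr i).2.1 = (Tr j).1 ∨ (Tr i).2.1 = (Tr j).2.2) ∧
    M = (Ns t).del X

/-- `M` is obtained from `N` by gluing wheels onto the triangles `Tr 0, …, Tr (t-1)`
of `N` (Definition 2.6). -/
def GluedWheels (M N : Matroid α) (t : ℕ) (Tr : Fin t → α × α × α) : Prop :=
  ∃ (n : Fin t → ℕ) (X : Set α), GluedWheelsData M N t Tr n X

/-- Gluing a single wheel of prescribed rank `n` onto the triangle `(a,b,c)`. -/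
def GluedOneWheel (M N : Matroid α) (a b c : α) (n : ℕ) : Prop :=
  ∃ X : Set α, GluedWheelsData M N 1 (fun _ => (a, b, c)) (fun _ => n) X
/-- In a fan whose parity bit is `b` (`b = true` iff the first triple is a triangle),
the element at (0-based) index `i` is a spoke element iff `spokeIdx b i`. -/
def spokeIdx (b : Bool) (i : ℕ) : Prop := (Even i ↔ b = true)

/-- `l` is a fan of `M` with parity bit `b`: a sequence of at least 3 distinct
elements whose consecutive triples alternate between triangles and triads,
starting with a triangle iff `b = true`. -/
def IsFanB (M : Matroid α) (b : Bool) (l : List α) : Prop :=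
  l.Nodup ∧ 3 ≤ l.length ∧ {x | x ∈ l} ⊆ M.E ∧
    ∀ (i : ℕ) (h : i + 2 < l.length),
      ((Even i ↔ b = true) →
        M.IsTriangle {l.get ⟨i, by omega⟩, l.get ⟨i+1, by omega⟩, l.get ⟨i+2, h⟩}) ∧
      (¬ (Even i ↔ b = true) →
        M.IsTriad {l.get ⟨i, by omega⟩, l.get ⟨i+1, by omega⟩, l.get ⟨i+2, h⟩})

/-- `l` is a fan of `M`. -/
def IsFan (M : Matroid α) (l : List α) : Prop := ∃ b, M.IsFanB b l

/-- `M` is obtained from `N` by a fan-lengthening move on the fan `l` of `M`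
(Definition 2.1). -/
def FanLengthening (M N : Matroid α) (l : List α) : Prop :=
  M.ThreeConn ∧ N.ThreeConn ∧
  ∃ (b : Bool) (h4 : 4 ≤ l.length), M.IsFanB b l ∧
    ((N = M.del {l.get ⟨0, by omega⟩} ∧ spokeIdx b 0) ∨
     (N = M.del {l.get ⟨l.length - 1, by omega⟩} ∧ spokeIdx b (l.length - 1)) ∨
     (N = M.con {l.get ⟨0, by omega⟩} ∧ ¬ spokeIdx b 0) ∨
     (N = M.con {l.get ⟨l.length - 1, by omega⟩} ∧ ¬ spokeIdx b (l.length - 1)) ∨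
     (5 ≤ l.length ∧ ∃ (i : ℕ) (h : i + 1 < l.length),
        (N = (M.con {l.get ⟨i, by omega⟩}).del {l.get ⟨i+1, h⟩} ∧
          ¬ spokeIdx b i ∧ spokeIdx b (i+1)) ∨
        (N = (M.con {l.get ⟨i+1, h⟩}).del {l.get ⟨i, by omega⟩} ∧
          spokeIdx b i ∧ ¬ spokeIdx b (i+1))))

/-- The sequence `F` is consistent with the sequence `G`: `F` is a (not necessarily
contiguous) subsequence of `G` or of its reversal. -/
def Consistent (F G : List α) : Prop := F.Sublist G ∨ F.Sublist G.reverse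

/-- A family of pairwise disjoint fans of `M`. -/
def FanFamily (M : Matroid α) (𝓕 : Set (List α)) : Prop :=
  (∀ F ∈ 𝓕, M.IsFan F) ∧
    ∀ F ∈ 𝓕, ∀ G ∈ 𝓕, F ≠ G → ∀ x, x ∈ F → x ∉ G

/-- `𝓕` is a covering family of `M` relative to `N` and `𝓕_N` (Definition 2.2). -/
def CoveringFamily (M N : Matroid α) (𝓕 𝓕N : Set (List α)) : Prop :=
  M.FanFamily 𝓕 ∧ 𝓕.encard = 𝓕N.encard ∧
    (∀ FN ∈ 𝓕N, ∃ F ∈ 𝓕, Consistent FN F) ∧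
    ∀ x ∈ M.E \ N.E, ∃ F ∈ 𝓕, x ∈ F

/-- The set of fan-extensions of `N` relative to `𝓕N` (Definition 2.3): the smallest
family of matroids containing `N` that is closed under fan-lengthening moves on fans
belonging to covering families. -/
inductive FanExt (N : Matroid α) (𝓕N : Set (List α)) : Matroid α → Prop
  | base : FanExt N 𝓕N N
  | lengthen {M M' : Matroid α} {𝓕 : Set (List α)} {F l : List α} :
      FanExt N 𝓕N M → CoveringFamily M N 𝓕 𝓕N → F ∈ 𝓕 →
      FanLengthening M' M l →
      (F.Sublist l ∨ F.Sublist l.reverse) →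
      ({x | x ∈ l} ⊆ {x | x ∈ F} ∪ (M'.E \ M.E)) →
      FanExt N 𝓕N M'
/-- Every square submatrix of `A` has determinant in `S`. -/
def SubdetsIn {R : Type} [CommRing R] {r : ℕ} (A : Matrix (Fin r) α R) (S : Set R) : Prop :=
  ∀ (k : ℕ) (f : Fin k → Fin r) (g : Fin k → α), Function.Injective f →
    Function.Injective g → (Matrix.of fun i j => A (f i) (g j)).det ∈ S

/-- The matrix `A` over a commutative ring represents the matroid `M`: a subset `I`
of the ground set is independent iff the columns of `I` contain a square submatrix of
size `|I|` with nonzero determinant. -/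
def RepMat {R : Type} [CommRing R] {r : ℕ} (A : Matrix (Fin r) α R) (M : Matroid α) : Prop :=
  ∀ I ⊆ M.E, (M.Indep I ↔ ∃ (k : ℕ) (f : Fin k → Fin r) (g : Fin k → α),
    Function.Injective f ∧ Function.Injective g ∧ Set.range g = I ∧
      (Matrix.of fun i j => A (f i) (g j)).det ≠ 0)

/-- `M` is representable over the partial field `(R, G)`: it is represented by a
matrix all of whose square subdeterminants lie in `G ∪ {0}`. -/
def PFRepresentable (R : Type) [CommRing R] (G : Set R) (M : Matroid α) : Prop :=
  ∃ (r : ℕ) (A : Matrix (Fin r) α R), SubdetsIn A (G ∪ {0}) ∧ RepMat A M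

end Matroid

/-- The underlying ring of the Hydra-5 partial field: `ℚ(α, β, γ)`. -/
abbrev H5Ring : Type := FractionRing (MvPolynomial (Fin 3) ℚ)

noncomputable def H5x (i : Fin 3) : H5Ring :=
  algebraMap (MvPolynomial (Fin 3) ℚ) H5Ring (MvPolynomial.X i)

/-- The generators of the group of the Hydra-5 partial field. -/
noncomputable def H5gens : Set H5Ring :=
  {-1, H5x 0, H5x 1, H5x 2, H5x 0 - 1, H5x 1 - 1, H5x 2 - 1,
    H5x 0 - H5x 2, H5x 2 - H5x 0 * H5x 1, (1 - H5x 2) - (1 - H5x 0) * H5x 1}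

/-- The set of elements of the subgroup of `ℚ(α,β,γ)ˣ` generated by the Hydra-5
generators, regarded as a set of ring elements. -/
noncomputable def H5Group : Set H5Ring :=
  {x | ∃ u : H5Ringˣ, u ∈ Subgroup.closure {v : H5Ringˣ | (v : H5Ring) ∈ H5gens} ∧ (u : H5Ring) = x}

/-- `M` is representable over the Hydra-5 partial field `ℍ₅`. -/
def H5Representable {α : Type} (M : Matroid α) : Prop :=
  Matroid.PFRepresentable H5Ring H5Group M

/-- The underlying ring of Semple's 2-uniform partial field `𝕌₂`: `ℚ(α₁, α₂)`. -/
abbrev U2Ring : Type := FractionRing (MvPolynomial (Fin 2) ℚ)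

noncomputable def U2x (i : Fin 2) : U2Ring :=
  algebraMap (MvPolynomial (Fin 2) ℚ) U2Ring (MvPolynomial.X i)

/-- The generators of the group of the 2-uniform partial field `𝕌₂`. -/
noncomputable def U2gens : Set U2Ring :=
  {-1, U2x 0, U2x 1, U2x 0 - 1, U2x 1 - 1, U2x 0 - U2x 1}

noncomputable def U2Group : Set U2Ring :=
  {x | ∃ u : U2Ringˣ, u ∈ Subgroup.closure {v : U2Ringˣ | (v : U2Ring) ∈ U2gens} ∧ (u : U2Ring) = x}

/-- `M` is representable over the 2-uniform partial field `𝕌₂`. -/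
def U2Representable {α : Type} (M : Matroid α) : Prop :=
  Matroid.PFRepresentable U2Ring U2Group M

/-- `𝓜₅`: the strictly `{U_{2,5}, U_{3,5}}`-fragile matroids representable over `ℍ₅`. -/
def M5mem {α : Type} (M : Matroid α) : Prop :=
  M.StrictlyU25U35Fragile ∧ H5Representable M

/-- `𝓜₂`: the strictly `{U_{2,5}, U_{3,5}}`-fragile matroids representable over `𝕌₂`. -/
def M2mem {α : Type} (M : Matroid α) : Prop :=
  M.StrictlyU25U35Fragile ∧ U2Representable M

section Matrices

variable {α : Type} {F : Type} [Field F] {r s : ℕ}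

/-- Two matrix representations over a field are equivalent if one is obtained from
the other by row operations (an invertible row transformation), column scaling and
a field automorphism. -/
def MatRepEquiv (A B : Matrix (Fin r) α F) : Prop :=
  ∃ (Q : Matrix (Fin r) (Fin r) F) (d : α → F) (σ : F ≃+* F),
    IsUnit Q.det ∧ (∀ j, d j ≠ 0) ∧
    ∀ i j, B i j = (∑ k, Q i k * σ (A k j)) * d j

/-- `M` has at least `n` pairwise inequivalent representations over the field `F`. -/
def HasNInequivReps (F : Type) [Field F] (M : Matroid α) (n : ℕ) : Prop :=
  ∃ (r : ℕ) (A : Fin n → Matrix (Fin r) α F),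
    (∀ i, Matroid.RepMat (A i) M) ∧ ∀ i j, i ≠ j → ¬ MatRepEquiv (A i) (A j)

/-- `B` is a representation of the minor `M / C ⧹ D` induced by the representation
`A` of `M`: after an invertible row transformation, the columns of `C` are supported
off the rows selected by `emb`, and `B` is read off from the selected rows. -/
def InducedRep (A : Matrix (Fin r) α F) (C : Set α) (B : Matrix (Fin s) α F) : Prop :=
  ∃ Q : Matrix (Fin r) (Fin r) F, IsUnit Q.det ∧ ∃ emb : Fin s ↪ Fin r,
    (∀ (i : Fin s), ∀ j ∈ C, (∑ k, Q (emb i) k * A k j) = 0) ∧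
    ∀ (i : Fin s) (j : α), j ∉ C → B i j = ∑ k, Q (emb i) k * A k j

end Matrices

section Pivot

variable {α : Type} [DecidableEq α] {R : Type} [CommRing R] {r : ℕ}

/-- The pivot of the matrix `A` on the entry `(p, q)`. -/
noncomputable def pivotMat (A : Matrix (Fin r) α R) (p : Fin r) (q : α) :
    Matrix (Fin r) α R :=
  fun i j =>
    if i = p then
      (if j = q then Ring.inverse (A p q) else Ring.inverse (A p q) * A p j)
    else
      (if j = q then - Ring.inverse (A p q) * A i q
       else A i j - A i q * Ring.inverse (A p q) * A p j)

/-- `B` is obtained from `A` by a (possibly empty) sequence of pivots on unit entries. -/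
def PivotReach (A B : Matrix (Fin r) α R) : Prop :=
  Relation.ReflTransGen (fun X Y => ∃ p q, IsUnit (X p q) ∧ Y = pivotMat X p q) A B

/-- The cross ratios of the matrix `A`: the values
`B i₁ j₁ * B i₂ j₂ * (B i₁ j₂)⁻¹ * (B i₂ j₁)⁻¹` over all matrices `B` obtained from
`A` by pivoting and all `2 × 2` submatrices of `B` whose entries are all units. -/
def crossRatios (A : Matrix (Fin r) α R) : Set R :=
  {x | ∃ B : Matrix (Fin r) α R, PivotReach A B ∧
    ∃ (i₁ i₂ : Fin r) (j₁ j₂ : α), i₁ ≠ i₂ ∧ j₁ ≠ j₂ ∧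
      IsUnit (B i₁ j₁) ∧ IsUnit (B i₁ j₂) ∧ IsUnit (B i₂ j₁) ∧ IsUnit (B i₂ j₂) ∧
      x = B i₁ j₁ * B i₂ j₂ * Ring.inverse (B i₁ j₂) * Ring.inverse (B i₂ j₁)}

end Pivot

/-- The projection of a matrix over the product ring `⊗ᵢ GF(5)` onto its `c`-th
coordinate. -/
def projMat {α : Type} {r k : ℕ} (A : Matrix (Fin r) α (Fin k → ZMod 5)) (c : Fin k) :
    Matrix (Fin r) α (ZMod 5) := fun i j => A i j c

/-- `A` is a representation of `M` over the product ring `⊗_{i=1}^k GF(5)`: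
every coordinate projection of `A` represents `M` over `GF(5)`. -/
def ProdRep {α : Type} {r k : ℕ} (A : Matrix (Fin r) α (Fin k → ZMod 5)) (M : Matroid α) : Prop :=
  ∀ c : Fin k, Matroid.RepMat (projMat A c) M

section Specific

open Matroid

/-- A labeled copy of the Fano matroid on ground set `{0,1,2,6,7,8,9} ⊆ ℕ` having
`(2,6,9)`, `(8,0,9)` and `(1,7,9)` as triangles, with `{6,0,7}` independent and
`{2,8,1}` a circuit. -/
def LabeledFano (F : Matroid ℕ) : Prop :=
  IsFano F ∧ F.E = {0, 1, 2, 6, 7, 8, 9} ∧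
    F.IsTriangle {2, 6, 9} ∧ F.IsTriangle {8, 0, 9} ∧ F.IsTriangle {1, 7, 9} ∧
    F.Indep {6, 0, 7} ∧ F.IsCircuit' {2, 8, 1}

/-- A labeled copy of `N₁₁`, the unique 3-connected Fano-fragile single-element
extension of `R₁₀`: the ground set is `{0, …, 10}`, deleting `10` gives `R₁₀`,
`(0, 10, 4)` is a triangle, and `N₁₁ / 10` has an `{F₇, F₇*}`-minor. -/
def IsN11L (N : Matroid ℕ) : Prop :=
  N.ThreeConn ∧ N.FanoFragile ∧ N.E = {n | n < 11} ∧
    IsR10Labeled (N.del {10}) ∧ N.IsTriangle {0, 10, 4} ∧ HasFanoMinor (N.con {10})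

/-- A copy of `N₁₂`: the 12-element binary matroid obtained from the Fano matroid by
gluing rank-3 wheels onto the triangles `(2,6,9)`, `(8,0,9)`, `(1,7,9)` and deleting
`{0,6,7,9}`. -/
def IsN12 (N : Matroid ℕ) : Prop :=
  ∃ F : Matroid ℕ, LabeledFano F ∧
    GluedWheelsData N F 3 ![(2, 6, 9), (8, 0, 9), (1, 7, 9)] (fun _ => 3)
      {0, 6, 7, 9}

/-- The columns of a graft representation: each element of the matroid is either an
edge of a graph on the vertex set `Fin k` (with column the sum of the incidence
vectors of its endpoints over `GF(2)`) or the distinguished graft column, the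
characteristic vector of the set `T` of graft vertices. -/
def graftCol (k : ℕ) (T : Finset (Fin k)) : Option (Fin k × Fin k) → (Fin k → ZMod 2)
  | none => fun v => if v ∈ T then 1 else 0
  | some (u, w) => fun v => (if v = u then 1 else 0) + (if v = w then 1 else 0)

/-- `M` has a graft representation: there are a graph `G` on vertex set `Fin k`, a
set `T` of vertices of `G`, and an assignment of the elements of `M` to the edges of
`G` together with one element assigned to the graft column `χ_T`, representing `M`
over `GF(2)`. -/
def HasGraftRep {α : Type} (M : Matroid α) : Prop :=
  ∃ (k : ℕ) (T : Finset (Fin k)) (f : α → Option (Fin k × Fin k)),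
    (∃ e ∈ M.E, ∀ x ∈ M.E, f x = none ↔ x = e) ∧
    M.IsRepBy (ZMod 2) (fun x => graftCol k T (f x))

/-- `P₆`: the 6-element rank-3 matroid with exactly one triangle. -/
def IsP6 {α : Type} (M : Matroid α) : Prop :=
  M.E.encard = 6 ∧ M.eRank' = 3 ∧ ∃! T : Set α, M.IsTriangle T

/-- A 4-element segment: four collinear points. -/
def Is4Segment {α : Type} (M : Matroid α) (A : Set α) : Prop :=
  A ⊆ M.E ∧ A.encard = 4 ∧ M.eRk' A = 2

/-- `X₈`: a specific 8-element 3-connected strictly `{U_{2,5},U_{3,5}}`-fragile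
`ℍ₅`-representable matroid having a 4-element segment and a 4-element cosegment. -/
def IsX8 (N : Matroid ℕ) : Prop :=
  M5mem N ∧ N.ThreeConn ∧ N.E.encard = 8 ∧
    (∃ S, Is4Segment N S) ∧ (∃ C, Is4Segment N✶ C)

/-- `Y₈`: a specific 8-element 3-connected strictly `{U_{2,5},U_{3,5}}`-fragile
`ℍ₅`-representable matroid. -/
def IsY8 (N : Matroid ℕ) : Prop :=
  M5mem N ∧ N.ThreeConn ∧ N.E.encard = 8

/-- `M_{9,9}`: a specific 9-element 3-connected strictly `{U_{2,5},U_{3,5}}`-fragile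
`ℍ₅`-representable matroid. -/
def IsM99 (N : Matroid ℕ) : Prop :=
  M5mem N ∧ N.ThreeConn ∧ N.E.encard = 9

/-- `M_{7,1}`: a specific 7-element rank-3 3-connected strictly
`{U_{2,5},U_{3,5}}`-fragile `ℍ₅`-representable matroid with a triangle `(1,3,2)`. -/
def IsM71 (N : Matroid ℕ) : Prop :=
  M5mem N ∧ N.ThreeConn ∧ N.E.encard = 7 ∧ N.eRank' = 3 ∧ N.IsTriangle {1, 3, 2}

/-- `M_{8,6}`: the 8-element matroid obtained from `M_{7,1}` by gluing a rank-3
wheel onto the triangle `(1,3,2)`. -/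
def IsM86 (N : Matroid ℕ) : Prop :=
  ∃ M71 : Matroid ℕ, IsM71 M71 ∧ GluedOneWheel N M71 1 3 2 3 ∧ N.E.encard = 8

/-- The rational representation vectors of the matroid `Θ_k` of Oxley, Semple and
Vertigan: `Sum.inl i` is `wᵢ` (a standard basis vector) and `Sum.inr i` is `zᵢ`,
a point of the segment `{z₁, …, z_k}` whose `j`-th coordinate is `i - j`. -/
def thetaVec (k : ℕ) : Fin k ⊕ Fin k → (Fin k → ℚ) :=
  Sum.elim (fun i j => if j = i then 1 else 0) (fun i j => (i : ℚ) - (j : ℚ))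

/-- `Θ` is a copy of the matroid `Θ_k` with `w` and `z` as its distinguished
labelings. -/
def IsTheta {α : Type} (Θ : Matroid α) (k : ℕ) (w z : Fin k → α) : Prop :=
  ∃ g : α → (Fin k ⊕ Fin k), Set.BijOn g Θ.E Set.univ ∧
    (∀ i, g (w i) = Sum.inl i) ∧ (∀ i, g (z i) = Sum.inr i) ∧
    Θ.IsRepBy ℚ (fun x => thetaVec k (g x))

/-- `M'` is obtained from `M` by a generalized `Δ-Y` exchange on the `k`-element
segment `A`: `M' = P_A(Θ_k, M) ⧹ A`, the generalized parallel connection of `M` with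
`Θ_k` along `A` (identified with the segment `{z₁, …, z_k}` of `Θ_k`), with `A`
deleted afterwards. -/
def DeltaY {α : Type} (M M' : Matroid α) (A : Set α) (k : ℕ) : Prop :=
  ∃ (Θ P : Matroid α) (w z : Fin k → α),
    IsTheta Θ k w z ∧ Set.range z = A ∧ M.E ∩ Θ.E = A ∧
    IsGPC P M Θ A ∧ M' = P.del A

/-- `M'` is a parallel extension of `M` by a single element. -/
def ParallelExt {α : Type} (M M' : Matroid α) : Prop :=
  ∃ e f : α, e ∉ M.E ∧ f ∈ M.E ∧ M'.del {e} = M ∧ M'.IsCircuit' {e, f}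

/-- `M'` is a series extension of `M` by a single element. -/
def SeriesExt {α : Type} (M M' : Matroid α) : Prop := ParallelExt M✶ M'✶

/-- One step in a path sequence: a generalized `Δ-Y` exchange on a 4-element
segment, a generalized `Δ-Y` exchange on a 4-element cosegment, a parallel or
series extension, or gluing a wheel onto a 3-element subset of a 4-element segment
or cosegment. -/
def PathStep (M M' : Matroid ℕ) : Prop :=
  (∃ A, Is4Segment M A ∧ DeltaY M M' A 4) ∨
  (∃ A, Is4Segment M✶ A ∧ DeltaY M✶ M'✶ A 4) ∨
  ParallelExt M M' ∨ SeriesExt M M' ∨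
  (∃ (a b c : ℕ) (n : ℕ) (A : Set ℕ), ({a, b, c} : Set ℕ) ⊆ A ∧
    (Is4Segment M A ∨ Is4Segment M✶ A) ∧ GluedOneWheel M' M a b c n)

/-- `M` can be obtained from a path sequence: it arises from `X₈` by repeatedly
performing the path-sequence steps. -/
def FromPathSeq (M : Matroid ℕ) : Prop :=
  ∃ X8 : Matroid ℕ, IsX8 X8 ∧ Relation.ReflTransGen PathStep X8 M

end Specific

section Aux10

open Matroid Set

variable {α : Type} {M : Matroid α} {X Y I : Set α} {e : α}

private lemma indep_le_eRk' (hI : M.Indep I) (hIX : I ⊆ X) : I.encard ≤ M.eRk' X := by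
  simp only [Matroid.eRk']
  exact le_iSup₂ (f := fun J (_ : J ∈ {J | M.Indep J ∧ J ⊆ X}) => J.encard) I ⟨hI, hIX⟩

private lemma eRk'_le {n : ℕ∞} (h : ∀ I, M.Indep I → I ⊆ X → I.encard ≤ n) :
    M.eRk' X ≤ n := by
  simp only [Matroid.eRk']
  exact iSup₂_le fun I hI => h I hI.1 hI.2

private lemma eRk'_mono (h : X ⊆ Y) : M.eRk' X ≤ M.eRk' Y :=
  eRk'_le fun _ hI hIX => indep_le_eRk' hI (hIX.trans h)

private lemma eRk'_empty (M : Matroid α) : M.eRk' (∅ : Set α) = 0 :=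
  le_antisymm (eRk'_le fun I _ hI => by simp [Set.subset_empty_iff.1 hI]) (zero_le)

private lemma eRk'_le_of_subset_closure (h : X ⊆ M.closure Y) : M.eRk' X ≤ M.eRk' Y := by
  refine eRk'_le fun I hI hIX => ?_
  obtain ⟨J, hJ⟩ := M.exists_isBasis' Y
  have hJb : (M ↾ M.closure Y).IsBase J :=
    Matroid.IsBasis.isBase_restrict hJ.isBasis_closure_right
  have hIind : (M ↾ M.closure Y).Indep I :=
    Matroid.restrict_indep_iff.2 ⟨hI, hIX.trans h⟩
  obtain ⟨B, hB, hIB⟩ := hIind.exists_isBase_superset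
  calc I.encard ≤ B.encard := Set.encard_mono hIB
    _ = J.encard := hB.encard_eq_encard_of_isBase hJb
    _ ≤ M.eRk' Y := indep_le_eRk' hJ.indep hJ.subset

private lemma eRk'_insert_le : M.eRk' (insert e X) ≤ M.eRk' X + 1 := by
  refine eRk'_le fun I hI hIX => ?_
  have h1 : I \ {e} ⊆ X := by
    rintro x ⟨hxI, hxe⟩
    rcases hIX hxI with rfl | hx
    · exact absurd (Set.mem_singleton _) hxe
    · exact hx
  have h2 : I.encard ≤ (I \ {e}).encard + 1 := by
    by_cases heI : e ∈ I
    · exact (Set.encard_diff_singleton_add_one heI).symm.le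
    · rw [Set.diff_singleton_eq_self heI]; exact le_self_add
  exact h2.trans (add_le_add_left (indep_le_eRk' (hI.subset Set.diff_subset) h1) 1)

private lemma eRk'_insert_eq (he : e ∈ M.E) (heX : e ∉ M.closure X) :
    M.eRk' (insert e X) = M.eRk' X + 1 := by
  refine le_antisymm eRk'_insert_le ?_
  have hne : ∃ I, I ∈ {I | M.Indep I ∧ I ⊆ X} := ⟨∅, M.empty_indep, Set.empty_subset X⟩
  have hrw : M.eRk' X + 1 = ⨆ I ∈ {I | M.Indep I ∧ I ⊆ X}, (I.encard + 1) :=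
    ENat.biSup_add' hne _
  rw [hrw]
  refine iSup₂_le fun I hI => ?_
  obtain ⟨hIind, hIX⟩ := hI
  have heI : e ∉ I := fun heI' => heX (M.inter_ground_subset_closure X ⟨hIX heI', he⟩)
  have hins : M.Indep (insert e I) :=
    (hIind.insert_indep_iff_of_notMem heI).2
      ⟨he, fun hecl => heX (M.closure_subset_closure hIX hecl)⟩
  calc I.encard + 1 = (insert e I).encard := (Set.encard_insert_of_notMem heI).symm
    _ ≤ M.eRk' (insert e X) := indep_le_eRk' hins (Set.insert_subset_insert hIX)

private lemma zmod2_cases : ∀ s : ZMod 2, s = 0 ∨ s = 1 := by decide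

variable {φ : α → (α →₀ ZMod 2)}

private lemma phi_ne_zero (hs : M.SimpleM) (hrep : M.IsRepBy (ZMod 2) φ)
    (he : e ∈ M.E) : φ e ≠ 0 := by
  have hind : M.Indep {e} := hs {e} (Set.singleton_subset_iff.2 he)
    (by rw [Set.encard_singleton]; exact one_le_two)
  have hli := (hrep {e} hind.subset_ground).1 hind
  exact hli.ne_zero ⟨e, rfl⟩

private lemma phi_injOn (hs : M.SimpleM) (hrep : M.IsRepBy (ZMod 2) φ) :
    Set.InjOn φ M.E := by
  intro x hx y hy hxy
  by_contra hne
  have hind : M.Indep {x, y} := hs _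
    (Set.insert_subset_iff.2 ⟨hx, Set.singleton_subset_iff.2 hy⟩) (Set.encard_pair hne).le
  have hli := (hrep _ hind.subset_ground).1 hind
  have h2 : (⟨x, by simp⟩ : ({x, y} : Set α)) = ⟨y, by simp⟩ := hli.injective hxy
  exact hne (congrArg Subtype.val h2)

private lemma mem_closure_iff_span (hrep : M.IsRepBy (ZMod 2) φ) (hI : M.Indep I)
    (he : e ∈ M.E) :
    e ∈ M.closure I ↔ φ e ∈ Submodule.span (ZMod 2) (φ '' I) := by
  by_cases heI : e ∈ I
  · exact iff_of_true (M.mem_closure_of_mem' heI he)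
      (Submodule.subset_span ⟨e, heI, rfl⟩)
  have hsub : insert e I ⊆ M.E := Set.insert_subset he hI.subset_ground
  have h1 := (hrep I hI.subset_ground).1 hI
  rw [hI.mem_closure_iff_of_notMem heI, Matroid.dep_iff, and_iff_left hsub,
    hrep _ hsub]
  rw [show LinearIndependent (ZMod 2) (fun x : (insert e I : Set α) => φ x) ↔ _ from
    linearIndepOn_insert heI]
  simp [show LinearIndepOn (ZMod 2) φ I from h1]

private lemma not_mem_closure_insert
    (hs : M.SimpleM) (hrep : M.IsRepBy (ZMod 2) φ) {F : Set α} (hF : M.IsFlat F)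
    {a b c : α} (ha : a ∈ M.E) (hb : b ∈ M.E) (hc : c ∈ M.E)
    (haF : a ∉ F) (hbF : b ∉ F) (hcF : c ∉ F)
    (hsum : φ c = φ a + φ b) : b ∉ M.closure (insert a F) := by
  intro hbcl
  obtain ⟨I, hI⟩ := M.exists_isBasis' F
  have hIF : M.closure I = F := by rw [hI.closure_eq_closure, hF.closure]
  have haI : M.Indep (insert a I) := by
    rw [hI.indep.insert_indep_iff_of_notMem (fun h => haF (hI.subset h))]
    exact ⟨ha, fun h => haF (hIF ▸ h)⟩
  have hcl2 : M.closure (insert a I) = M.closure (insert a F) := by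
    rw [← M.closure_insert_closure_eq_closure_insert, hIF]
  have hbmem : φ b ∈ Submodule.span (ZMod 2) (φ '' (insert a I)) :=
    (mem_closure_iff_span hrep haI hb).1 (by rw [hcl2]; exact hbcl)
  rw [Set.image_insert_eq, Submodule.mem_span_insert] at hbmem
  obtain ⟨t, z, hz, hbz⟩ := hbmem
  rcases zmod2_cases t with rfl | rfl
  · rw [zero_smul, zero_add] at hbz
    have hbI : b ∈ M.closure I := (mem_closure_iff_span hrep hI.indep hb).2 (hbz ▸ hz)
    exact hbF (hIF ▸ hbI)
  · rw [one_smul] at hbz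
    have haa : φ a + φ a = 0 := by
      have h2 : (1 : ZMod 2) + 1 = 0 := by decide
      calc φ a + φ a = ((1 : ZMod 2) + 1) • φ a := by rw [add_smul, one_smul]
        _ = 0 := by rw [h2, zero_smul]
    have hcz : φ c = z := by rw [hsum, hbz, ← add_assoc, haa, zero_add]
    rw [← hcz] at hz
    exact hcF (hIF ▸ (mem_closure_iff_span hrep hI.indep hc).2 hz)

end Aux10

open Matroid in
/-- In a simple binary matroid, every triangle is a modular
flat. -/
theorem statement_10 {α : Type} (M : Matroid α) (hs : M.SimpleM) (hb : M.Binary)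
    (T : Set α) (hT : M.IsTriangle T) : M.ModularFlat T := by
  classical
  obtain ⟨hC, h3⟩ := hT
  obtain ⟨a, b, c, hab, hac, hbc, rfl⟩ := Set.encard_eq_three.1 h3
  obtain ⟨φ, hrep⟩ := hb
  have hTE : ({a, b, c} : Set α) ⊆ M.E := hC.1.2
  have haE : a ∈ M.E := hTE (by simp)
  have hbE : b ∈ M.E := hTE (by simp)
  have hcE : c ∈ M.E := hTE (by simp)
  have hinj := phi_injOn hs hrep
  -- every pair from the triangle is independent, and the third element is in its closure
  have hpair : ∀ x y z : α, ({x, y, z} : Set α) = {a, b, c} → z ∉ ({x, y} : Set α) →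
      M.Indep {x, y} ∧ z ∈ M.closure {x, y} := by
    intro x y z hxyz hz
    have hzmem : z ∈ ({a, b, c} : Set α) := by rw [← hxyz]; simp
    have hss : ({x, y} : Set α) ⊂ {a, b, c} := by
      refine Set.ssubset_iff_subset_ne.2 ⟨?_, fun h => hz (by rw [h]; exact hzmem)⟩
      rw [← hxyz]; intro w hw
      simp only [Set.mem_insert_iff, Set.mem_singleton_iff] at hw ⊢; tauto
    have hind := hC.2 _ hss
    refine ⟨hind, ?_⟩
    rw [hind.mem_closure_iff_of_notMem hz]
    have hins : (insert z {x, y} : Set α) = {a, b, c} := by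
      rw [← hxyz]; ext w
      simp only [Set.mem_insert_iff, Set.mem_singleton_iff]; tauto
    rw [hins]; exact hC.1
  have habind : M.Indep {a, b} := (hpair a b c rfl (by simp [Ne.symm hac, Ne.symm hbc])).1
  have hccl : c ∈ M.closure ({a, b} : Set α) :=
    (hpair a b c rfl (by simp [Ne.symm hac, Ne.symm hbc])).2
  -- sum of the three vectors is zero
  have hsum : φ c = φ a + φ b := by
    have hspan : φ c ∈ Submodule.span (ZMod 2) (φ '' ({a, b} : Set α)) :=
      (mem_closure_iff_span hrep habind hcE).1 hccl
    rw [Set.image_pair, Submodule.mem_span_pair] at hspan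
    obtain ⟨s, t, hst⟩ := hspan
    rcases zmod2_cases s with rfl | rfl <;> rcases zmod2_cases t with rfl | rfl <;>
      simp only [zero_smul, one_smul, zero_add, add_zero] at hst
    · exact absurd hst.symm (phi_ne_zero hs hrep hcE)
    · exact absurd (hinj hbE hcE hst) (Ne.symm hbc).symm
    · exact absurd (hinj haE hcE hst) hac.elim
    · exact hst.symm
  -- elements of the ground set in the span of {φ a, φ b} lie in the triangle
  have hspan_cases : ∀ d ∈ M.E, φ d ∈ Submodule.span (ZMod 2) (φ '' ({a, b} : Set α)) →
      d ∈ ({a, b, c} : Set α) := by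
    intro d hdE hdspan
    rw [Set.image_pair, Submodule.mem_span_pair] at hdspan
    obtain ⟨s, t, hst⟩ := hdspan
    rcases zmod2_cases s with rfl | rfl <;> rcases zmod2_cases t with rfl | rfl <;>
      simp only [zero_smul, one_smul, zero_add, add_zero] at hst
    · exact absurd hst.symm (phi_ne_zero hs hrep hdE)
    · have h := hinj hbE hdE hst; rw [← h]; simp
    · have h := hinj haE hdE hst; rw [← h]; simp
    · have h := hinj hcE hdE (by rw [hsum]; exact hst); rw [← h]; simp
  have habsub : ({a, b} : Set α) ⊆ ({a, b, c} : Set α) := by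
    intro w hw; simp only [Set.mem_insert_iff, Set.mem_singleton_iff] at hw ⊢; tauto
  have hbasisab : M.IsBasis {a, b} ({a, b, c} : Set α) := by
    refine habind.isBasis_of_subset_of_subset_closure habsub ?_
    intro w hw
    simp only [Set.mem_insert_iff, Set.mem_singleton_iff] at hw
    rcases hw with rfl | rfl | rfl
    · exact M.mem_closure_of_mem' (by simp) haE
    · exact M.mem_closure_of_mem' (by simp) hbE
    · exact hccl
  -- the triangle is a flat
  have hFlat : M.IsFlat ({a, b, c} : Set α) := by
    refine ⟨fun I X hIT hIX => ?_, hTE⟩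
    intro d hd
    have hdE : d ∈ M.E := hIX.subset_ground hd
    have hdcl : d ∈ M.closure ({a, b} : Set α) := by
      have h1 : d ∈ M.closure I := hIX.subset_closure hd
      rwa [hIT.closure_eq_closure, ← hbasisab.closure_eq_closure] at h1
    exact hspan_cases d hdE ((mem_closure_iff_span hrep habind hdE).1 hdcl)
  -- rank of the triangle is 2
  have h2 : M.eRk' ({a, b, c} : Set α) = 2 := by
    refine le_antisymm (eRk'_le fun I hI hIT => ?_) ?_
    · have hne : I ≠ {a, b, c} := fun h => hC.1.1 (h ▸ hI)
      have hfin : ({a, b, c} : Set α).Finite :=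
        ((Set.finite_singleton c).insert b).insert a
      have hlt := (hfin.subset hIT).encard_lt_encard (hIT.ssubset_of_ne hne)
      rw [h3] at hlt
      exact Order.le_of_lt_add_one (by rwa [show (3 : ℕ∞) = 2 + 1 by norm_num] at hlt)
    · have h := indep_le_eRk' habind habsub
      rwa [Set.encard_pair hab] at h
  have h1rk : ∀ x ∈ M.E, M.eRk' ({x} : Set α) = 1 := by
    intro x hx
    refine le_antisymm (eRk'_le fun I _ hIx => ?_) ?_
    · exact (Set.encard_mono hIx).trans_eq (Set.encard_singleton x)
    · have h := indep_le_eRk' (hs {x} (Set.singleton_subset_iff.2 hx)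
        (by rw [Set.encard_singleton]; exact one_le_two)) subset_rfl
      rwa [Set.encard_singleton] at h
  refine ⟨hFlat, fun F' hF' => ?_⟩
  have hFE := hF'.subset_ground
  -- helper for the case of exactly one common element
  have case_one : ∀ x y z : α, ({x, y, z} : Set α) = {a, b, c} →
      z ∈ M.closure ({x, y} : Set α) → x ∈ F' → y ∉ F' → z ∉ F' →
      M.eRk' ({a, b, c} : Set α) + M.eRk' F' =
        M.eRk' (({a, b, c} : Set α) ∪ F') + M.eRk' (({a, b, c} : Set α) ∩ F') := by
    intro x y z hxyz hzcl hxF hyF hzF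
    have hyE : y ∈ M.E := hTE (by rw [← hxyz]; simp)
    have hinter : ({a, b, c} : Set α) ∩ F' = {x} := by
      rw [← hxyz]; ext w
      simp only [Set.mem_inter_iff, Set.mem_insert_iff, Set.mem_singleton_iff]
      constructor
      · rintro ⟨rfl | rfl | rfl, hwF⟩
        · rfl
        · exact absurd hwF hyF
        · exact absurd hwF hzF
      · rintro rfl; exact ⟨Or.inl rfl, hxF⟩
    have hyclF : y ∉ M.closure F' := by rw [hF'.closure]; exact hyF
    have hrky : M.eRk' (insert y F') = M.eRk' F' + 1 := eRk'_insert_eq hyE hyclF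
    have hun : M.eRk' (({a, b, c} : Set α) ∪ F') = M.eRk' F' + 1 := by
      refine le_antisymm ?_ ?_
      · refine (eRk'_le_of_subset_closure ?_).trans_eq hrky
        have hsubE : insert y F' ⊆ M.E := Set.insert_subset hyE hFE
        have hbase : insert y F' ⊆ M.closure (insert y F') := M.subset_closure _ hsubE
        intro w hw
        rcases hw with hw | hw
        · rw [← hxyz] at hw
          simp only [Set.mem_insert_iff, Set.mem_singleton_iff] at hw
          rcases hw with rfl | rfl | rfl
          · exact hbase (Set.mem_insert_of_mem _ hxF)
          · exact hbase (Set.mem_insert _ _)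
          · refine M.closure_subset_closure ?_ hzcl
            intro u hu
            simp only [Set.mem_insert_iff, Set.mem_singleton_iff] at hu
            rcases hu with rfl | rfl
            · exact Set.mem_insert_of_mem _ hxF
            · exact Set.mem_insert _ _
        · exact hbase (Set.mem_insert_of_mem _ hw)
      · rw [← hrky]
        refine eRk'_mono (Set.insert_subset ?_ Set.subset_union_right)
        exact Set.mem_union_left _ (by rw [← hxyz]; simp)
    rw [h2, hinter, h1rk x (hFE hxF), hun]
    ring
  by_cases haF : a ∈ F' <;> by_cases hbF : b ∈ F' <;> by_cases hcF : c ∈ F'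
  · -- all three in F'
    have hsub : ({a, b, c} : Set α) ⊆ F' := by
      intro w hw
      simp only [Set.mem_insert_iff, Set.mem_singleton_iff] at hw
      rcases hw with rfl | rfl | rfl <;> assumption
    rw [Set.union_eq_self_of_subset_left hsub, Set.inter_eq_self_of_subset_left hsub]
    ring
  · -- a, b ∈ F', c ∉ F' : impossible
    exfalso
    have hsub : ({a, b} : Set α) ⊆ F' := by
      intro w hw
      simp only [Set.mem_insert_iff, Set.mem_singleton_iff] at hw
      rcases hw with rfl | rfl <;> assumption
    have hmem : c ∈ M.closure F' := M.closure_subset_closure hsub hccl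
    rw [hF'.closure] at hmem
    exact hcF hmem
  · -- a, c ∈ F', b ∉ F' : impossible
    exfalso
    have hxyz : ({c, a, b} : Set α) = {a, b, c} := by
      ext w; simp only [Set.mem_insert_iff, Set.mem_singleton_iff]; tauto
    have hbcl : b ∈ M.closure ({c, a} : Set α) :=
      (hpair c a b hxyz (by simp [Ne.symm hab, hbc])).2
    have hsub : ({c, a} : Set α) ⊆ F' := by
      intro w hw
      simp only [Set.mem_insert_iff, Set.mem_singleton_iff] at hw
      rcases hw with rfl | rfl <;> assumption
    have hmem : b ∈ M.closure F' := M.closure_subset_closure hsub hbcl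
    rw [hF'.closure] at hmem
    exact hbF hmem
  · -- only a ∈ F'
    exact case_one a b c rfl hccl haF hbF hcF
  · -- b, c ∈ F', a ∉ F' : impossible
    exfalso
    have hxyz : ({b, c, a} : Set α) = {a, b, c} := by
      ext w; simp only [Set.mem_insert_iff, Set.mem_singleton_iff]; tauto
    have hacl : a ∈ M.closure ({b, c} : Set α) :=
      (hpair b c a hxyz (by simp [hab, hac])).2
    have hsub : ({b, c} : Set α) ⊆ F' := by
      intro w hw
      simp only [Set.mem_insert_iff, Set.mem_singleton_iff] at hw
      rcases hw with rfl | rfl <;> assumption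
    have hmem : a ∈ M.closure F' := M.closure_subset_closure hsub hacl
    rw [hF'.closure] at hmem
    exact haF hmem
  · -- only b ∈ F'
    have hxyz : ({b, a, c} : Set α) = {a, b, c} := by
      ext w; simp only [Set.mem_insert_iff, Set.mem_singleton_iff]; tauto
    have hzcl : c ∈ M.closure ({b, a} : Set α) :=
      (hpair b a c hxyz (by simp [Ne.symm hbc, Ne.symm hac])).2
    exact case_one b a c hxyz hzcl hbF haF hcF
  · -- only c ∈ F'
    have hxyz : ({c, a, b} : Set α) = {a, b, c} := by
      ext w; simp only [Set.mem_insert_iff, Set.mem_singleton_iff]; tauto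
    have hzcl : b ∈ M.closure ({c, a} : Set α) :=
      (hpair c a b hxyz (by simp [Ne.symm hab, hbc])).2
    exact case_one c a b hxyz hzcl hcF haF hbF
  · -- none in F'
    have haclF : a ∉ M.closure F' := by rw [hF'.closure]; exact haF
    have hr1 : M.eRk' (insert a F') = M.eRk' F' + 1 := eRk'_insert_eq haE haclF
    have hbcl : b ∉ M.closure (insert a F') :=
      not_mem_closure_insert hs hrep hF' haE hbE hcE haF hbF hcF hsum
    have hr2 : M.eRk' (insert b (insert a F')) = M.eRk' F' + 1 + 1 := by
      rw [eRk'_insert_eq hbE hbcl, hr1]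
    have hun : M.eRk' (({a, b, c} : Set α) ∪ F') = M.eRk' F' + 1 + 1 := by
      refine le_antisymm ?_ ?_
      · refine (eRk'_le_of_subset_closure ?_).trans_eq hr2
        have hsubE : insert b (insert a F') ⊆ M.E :=
          Set.insert_subset hbE (Set.insert_subset haE hFE)
        have hbase : insert b (insert a F') ⊆ M.closure (insert b (insert a F')) :=
          M.subset_closure _ hsubE
        intro w hw
        rcases hw with hw | hw
        · simp only [Set.mem_insert_iff, Set.mem_singleton_iff] at hw
          rcases hw with rfl | rfl | rfl
          · exact hbase (Set.mem_insert_of_mem _ (Set.mem_insert _ _))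
          · exact hbase (Set.mem_insert _ _)
          · refine M.closure_subset_closure ?_ hccl
            intro u hu
            simp only [Set.mem_insert_iff, Set.mem_singleton_iff] at hu
            rcases hu with rfl | rfl
            · exact Set.mem_insert_of_mem _ (Set.mem_insert _ _)
            · exact Set.mem_insert _ _
        · exact hbase (Set.mem_insert_of_mem _ (Set.mem_insert_of_mem _ hw))
      · rw [← hr2]
        refine eRk'_mono ?_
        refine Set.insert_subset (Set.mem_union_left _ (by simp)) ?_
        exact Set.insert_subset (Set.mem_union_left _ (by simp)) Set.subset_union_right
    have hinter : ({a, b, c} : Set α) ∩ F' = ∅ := by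
      refine Set.eq_empty_iff_forall_notMem.2 ?_
      rintro w ⟨hwT, hwF⟩
      simp only [Set.mem_insert_iff, Set.mem_singleton_iff] at hwT
      rcases hwT with rfl | rfl | rfl <;> [exact haF hwF; exact hbF hwF; exact hcF hwF]
    rw [h2, hun, hinter, eRk'_empty]
    ring
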